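/- Let c_1 ∈ ℂ with c_1 ≠ 0, let ξ_1 ∈ ℂ, set s_0 = c_1 and s_1 = c_1·ξ_1, and let σ > 0, z ∈ ℂ. Define ν_1 = |s_0|² + |s_1|² − |s_0 + z̄·s_1|²/(1 + |z|²) and μ_1 = (s_0 + z̄·s_1)/(1 + |z|²). Then (1/(πσ²)²) · e^{−ν_1/σ²} · ∫_{ℝ²} |x + iy|² · exp(−|x + iy − μ_1|²·(1 + |z|²)/σ²) dx dy = exp(−ρ·|z − ξ_1|²/(1 + |z|²)) · ( ρ·|1 + z̄·ξ_1|² / (π·(1 + |z|²)³) + 1 / (π·(1 + |z|²)²) ), where ρ = |c_1|²/σ² and z̄ denotes the complex conjugate of z. -/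

import Mathlib

open MeasureTheory Real Filter

section aux

variable {b : ℝ}

lemma aux_tendsto_exp (hb : 0 < b) :
    Tendsto (fun x : ℝ => rexp (-b * x ^ 2)) (cocompact ℝ) (nhds 0) := by
  have h := tendsto_rpow_abs_mul_exp_neg_mul_sq_cocompact hb 0
  refine h.congr' ?_
  filter_upwards [(isCompact_singleton (x := (0:ℝ))).compl_mem_cocompact] with x hx
  have : x ≠ 0 := by simpa using hx
  rw [Real.rpow_zero, one_mul]

lemma aux_tendsto_x_exp (hb : 0 < b) :
    Tendsto (fun x : ℝ => x * rexp (-b * x ^ 2)) (cocompact ℝ) (nhds 0) := by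
  rw [tendsto_zero_iff_norm_tendsto_zero]
  have h := tendsto_rpow_abs_mul_exp_neg_mul_sq_cocompact hb 1
  refine h.congr fun x => ?_
  rw [Real.rpow_one, Real.norm_eq_abs, abs_mul, abs_of_pos (Real.exp_pos _)]

lemma aux_integrable_pow (hb : 0 < b) (n : ℕ) :
    Integrable fun x : ℝ => x ^ n * rexp (-b * x ^ 2) := by
  have h := integrable_rpow_mul_exp_neg_mul_sq hb (s := (n : ℝ))
    (by exact_mod_cast neg_one_lt_zero.trans_le (Nat.cast_nonneg n))
  simpa [Real.rpow_natCast] using h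

lemma aux_gauss1 (hb : 0 < b) : ∫ x : ℝ, x * rexp (-b * x ^ 2) = 0 := by
  have hd : ∀ x : ℝ, HasDerivAt (fun x : ℝ => -(2 * b)⁻¹ * rexp (-b * x ^ 2))
      (x * rexp (-b * x ^ 2)) x := by
    intro x
    have h1 : HasDerivAt (fun x : ℝ => -b * x ^ 2) (-b * (2 * x)) x := by
      simpa using ((hasDerivAt_pow 2 x).const_mul (-b))
    have h2 := (h1.exp).const_mul (-(2 * b)⁻¹)
    refine h2.congr_deriv ?_
    field_simp
  have hint : Integrable fun x : ℝ => x * rexp (-b * x ^ 2) := by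
    simpa using aux_integrable_pow hb 1
  have hcc : Tendsto (fun x : ℝ => -(2 * b)⁻¹ * rexp (-b * x ^ 2)) (cocompact ℝ)
      (nhds 0) := by
    simpa using (aux_tendsto_exp hb).const_mul (-(2 * b)⁻¹)
  rw [cocompact_eq_atBot_atTop, tendsto_sup] at hcc
  have := MeasureTheory.integral_of_hasDerivAt_of_tendsto hd hint hcc.1 hcc.2
  simpa using this

lemma aux_gauss2 (hb : 0 < b) :
    ∫ x : ℝ, x ^ 2 * rexp (-b * x ^ 2) = Real.sqrt (π / b) / (2 * b) := by
  have hd : ∀ x : ℝ, HasDerivAt (fun x : ℝ => x * rexp (-b * x ^ 2))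
      (rexp (-b * x ^ 2) + -(2 * b) * (x ^ 2 * rexp (-b * x ^ 2))) x := by
    intro x
    have h1 : HasDerivAt (fun x : ℝ => -b * x ^ 2) (-b * (2 * x)) x := by
      simpa using ((hasDerivAt_pow 2 x).const_mul (-b))
    have h2 := (hasDerivAt_id x).mul h1.exp
    refine h2.congr_deriv ?_
    simp only [id_eq, one_mul]
    ring
  have hi0 : Integrable fun x : ℝ => rexp (-b * x ^ 2) := integrable_exp_neg_mul_sq hb
  have hi2 : Integrable fun x : ℝ => x ^ 2 * rexp (-b * x ^ 2) := aux_integrable_pow hb 2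
  have hint : Integrable fun x : ℝ =>
      rexp (-b * x ^ 2) + -(2 * b) * (x ^ 2 * rexp (-b * x ^ 2)) :=
    hi0.add (hi2.const_mul _)
  have hcc := aux_tendsto_x_exp hb
  rw [cocompact_eq_atBot_atTop, tendsto_sup] at hcc
  have key := MeasureTheory.integral_of_hasDerivAt_of_tendsto hd hint hcc.1 hcc.2
  rw [sub_zero] at key
  rw [MeasureTheory.integral_add hi0 (hi2.const_mul _), MeasureTheory.integral_const_mul,
    integral_gaussian] at key
  have hb' : (2 * b) ≠ 0 := by positivity
  field_simp at key ⊢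
  linarith

lemma aux_integrable_shift (hb : 0 < b) (p : ℝ) (n : ℕ) :
    Integrable fun x : ℝ => x ^ n * rexp (-b * (x - p) ^ 2) := by
  have h : Integrable fun x : ℝ => (x + p) ^ n * rexp (-b * x ^ 2) := by
    have : ∀ x : ℝ, (x + p) ^ n * rexp (-b * x ^ 2) =
        ∑ k ∈ Finset.range (n + 1),
          (p ^ (n - k) * (n.choose k : ℝ)) * (x ^ k * rexp (-b * x ^ 2)) := by
      intro x
      rw [add_pow, Finset.sum_mul]
      exact Finset.sum_congr rfl fun k _ => by ring
    rw [funext this]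
    exact integrable_finset_sum _ fun k _ => (aux_integrable_pow hb k).const_mul _
  have := h.comp_sub_right p
  simpa using this

lemma aux_gauss_shift0 (hb : 0 < b) (p : ℝ) :
    ∫ x : ℝ, rexp (-b * (x - p) ^ 2) = Real.sqrt (π / b) := by
  have h := MeasureTheory.integral_add_right_eq_self (μ := volume)
    (fun x : ℝ => rexp (-b * (x - p) ^ 2)) p
  simp only [add_sub_cancel_right] at h
  rw [← h, integral_gaussian]

lemma aux_gauss_shift2 (hb : 0 < b) (p : ℝ) :
    ∫ x : ℝ, x ^ 2 * rexp (-b * (x - p) ^ 2) =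
      Real.sqrt (π / b) * (p ^ 2 + (2 * b)⁻¹) := by
  have h := MeasureTheory.integral_add_right_eq_self (μ := volume)
    (fun x : ℝ => x ^ 2 * rexp (-b * (x - p) ^ 2)) p
  simp only [add_sub_cancel_right] at h
  rw [← h]
  have expand : ∀ x : ℝ, (x + p) ^ 2 * rexp (-b * x ^ 2) =
      x ^ 2 * rexp (-b * x ^ 2) + ((2 * p) * (x * rexp (-b * x ^ 2)) +
        p ^ 2 * rexp (-b * x ^ 2)) := by
    intro x; ring
  rw [funext expand]
  have hi0 : Integrable fun x : ℝ => rexp (-b * x ^ 2) := integrable_exp_neg_mul_sq hb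
  have hi1 : Integrable fun x : ℝ => x * rexp (-b * x ^ 2) := by
    simpa using aux_integrable_pow hb 1
  have hi2 : Integrable fun x : ℝ => x ^ 2 * rexp (-b * x ^ 2) := aux_integrable_pow hb 2
  rw [MeasureTheory.integral_add (f := fun x : ℝ => x ^ 2 * rexp (-b * x ^ 2))
      (g := fun x : ℝ => 2 * p * (x * rexp (-b * x ^ 2)) + p ^ 2 * rexp (-b * x ^ 2))
      hi2 ((hi1.const_mul (2 * p)).add (hi0.const_mul (p ^ 2))),
    MeasureTheory.integral_add (hi1.const_mul (2 * p)) (hi0.const_mul (p ^ 2)),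
    MeasureTheory.integral_const_mul, MeasureTheory.integral_const_mul,
    aux_gauss1 hb, aux_gauss2 hb, integral_gaussian]
  ring

lemma aux_gauss2d (hb : 0 < b) (p q : ℝ) :
    ∫ w : ℝ × ℝ, (w.1 ^ 2 + w.2 ^ 2) * rexp (-b * ((w.1 - p) ^ 2 + (w.2 - q) ^ 2)) =
      π / b * (p ^ 2 + q ^ 2 + 1 / b) := by
  have expand : ∀ w : ℝ × ℝ,
      (w.1 ^ 2 + w.2 ^ 2) * rexp (-b * ((w.1 - p) ^ 2 + (w.2 - q) ^ 2)) =
      (w.1 ^ 2 * rexp (-b * (w.1 - p) ^ 2)) * rexp (-b * (w.2 - q) ^ 2) +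
      (rexp (-b * (w.1 - p) ^ 2)) * (w.2 ^ 2 * rexp (-b * (w.2 - q) ^ 2)) := by
    intro w
    rw [show -b * ((w.1 - p) ^ 2 + (w.2 - q) ^ 2) =
        -b * (w.1 - p) ^ 2 + -b * (w.2 - q) ^ 2 by ring, Real.exp_add]
    ring
  rw [funext expand]
  have hxp2 := aux_integrable_shift hb p 2
  have hxp0 : Integrable fun x : ℝ => rexp (-b * (x - p) ^ 2) := by
    simpa using aux_integrable_shift hb p 0
  have hxq2 := aux_integrable_shift hb q 2
  have hxq0 : Integrable fun x : ℝ => rexp (-b * (x - q) ^ 2) := by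
    simpa using aux_integrable_shift hb q 0
  rw [show (volume : Measure (ℝ × ℝ)) = (volume : Measure ℝ).prod volume from
    MeasureTheory.Measure.volume_eq_prod ℝ ℝ]
  rw [MeasureTheory.integral_add (hxp2.mul_prod hxq0) (hxp0.mul_prod hxq2),
    MeasureTheory.integral_prod_mul (fun x : ℝ => x ^ 2 * rexp (-b * (x - p) ^ 2))
      (fun y : ℝ => rexp (-b * (y - q) ^ 2)),
    MeasureTheory.integral_prod_mul (fun x : ℝ => rexp (-b * (x - p) ^ 2))
      (fun y : ℝ => y ^ 2 * rexp (-b * (y - q) ^ 2)),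
    aux_gauss_shift2 hb p, aux_gauss_shift2 hb q, aux_gauss_shift0 hb p,
    aux_gauss_shift0 hb q]
  have hs : Real.sqrt (π / b) * Real.sqrt (π / b) = π / b :=
    Real.mul_self_sqrt (by positivity)
  have hb' : b ≠ 0 := ne_of_gt hb
  have h2 : (2 * b)⁻¹ + (2 * b)⁻¹ = 1 / b := by
    rw [(one_div (2 * b)).symm, ← add_div, div_eq_div_iff (by positivity) hb']
    ring
  calc Real.sqrt (π / b) * (p ^ 2 + (2 * b)⁻¹) * Real.sqrt (π / b) +
        Real.sqrt (π / b) * (Real.sqrt (π / b) * (q ^ 2 + (2 * b)⁻¹))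
      = Real.sqrt (π / b) * Real.sqrt (π / b) *
          (p ^ 2 + q ^ 2 + ((2 * b)⁻¹ + (2 * b)⁻¹)) := by ring
    _ = π / b * (p ^ 2 + q ^ 2 + 1 / b) := by rw [hs, h2]

end aux

/-- Lemma 1.3: closed form of the condensed density `h₂⁽¹⁾(z,σ)`
for `n = 2`, with `s₀ = c₁`, `s₁ = c₁ ξ₁` and SNR `ρ = |c₁|²/σ²`. -/
theorem stmt_5 (c₁ ξ₁ : ℂ) (hc : c₁ ≠ 0) (σ : ℝ) (hσ : 0 < σ) (z : ℂ)
    (s₀ s₁ : ℂ) (hs₀ : s₀ = c₁) (hs₁ : s₁ = c₁ * ξ₁)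
    (ν₁ : ℝ)
    (hν₁ : ν₁ = ‖s₀‖ ^ 2 + ‖s₁‖ ^ 2 -
      ‖s₀ + (starRingEnd ℂ) z * s₁‖ ^ 2 / (1 + ‖z‖ ^ 2))
    (μ₁ : ℂ)
    (hμ₁ : μ₁ = (s₀ + (starRingEnd ℂ) z * s₁) / ((1 + ‖z‖ ^ 2 : ℝ) : ℂ))
    (ρ : ℝ) (hρ : ρ = ‖c₁‖ ^ 2 / σ ^ 2) :
    (1 / (Real.pi * σ ^ 2) ^ 2) * Real.exp (-ν₁ / σ ^ 2) *
      ∫ q : ℝ × ℝ,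
        ‖(q.1 : ℂ) + q.2 * Complex.I‖ ^ 2 *
          Real.exp (-(‖(q.1 : ℂ) + q.2 * Complex.I - μ₁‖ ^ 2 *
            (1 + ‖z‖ ^ 2) / σ ^ 2)) =
    Real.exp (-(ρ * ‖z - ξ₁‖ ^ 2 / (1 + ‖z‖ ^ 2))) *
      (ρ * ‖1 + (starRingEnd ℂ) z * ξ₁‖ ^ 2 /
          (Real.pi * (1 + ‖z‖ ^ 2) ^ 3) +
        1 / (Real.pi * (1 + ‖z‖ ^ 2) ^ 2)) := by
  have hσ2 : (0:ℝ) < σ ^ 2 := by positivity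
  set t : ℝ := ‖z‖ ^ 2 with ht
  have ht0 : (0:ℝ) ≤ t := by positivity
  have ht1 : (0:ℝ) < 1 + t := by linarith
  set b : ℝ := (1 + t) / σ ^ 2 with hb
  have hb0 : 0 < b := by positivity
  set A : ℝ := ‖c₁‖ ^ 2 with hA
  set K : ℝ := ‖1 + (starRingEnd ℂ) z * ξ₁‖ ^ 2 with hK
  set D : ℝ := ‖z - ξ₁‖ ^ 2 with hD
  have hw : s₀ + (starRingEnd ℂ) z * s₁ = c₁ * (1 + (starRingEnd ℂ) z * ξ₁) := by
    rw [hs₀, hs₁]; ring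
  -- the Gaussian integral
  have hint : (∫ q : ℝ × ℝ,
      ‖(q.1 : ℂ) + q.2 * Complex.I‖ ^ 2 *
        Real.exp (-(‖(q.1 : ℂ) + q.2 * Complex.I - μ₁‖ ^ 2 *
          (1 + t) / σ ^ 2))) =
      π / b * (μ₁.re ^ 2 + μ₁.im ^ 2 + 1 / b) := by
    rw [← aux_gauss2d hb0 μ₁.re μ₁.im]
    congr 1
    funext w
    have h1 : ‖(w.1 : ℂ) + w.2 * Complex.I‖ ^ 2 = w.1 ^ 2 + w.2 ^ 2 := by
      rw [Complex.sq_norm, Complex.normSq_apply]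
      simp
      ring
    have h2 : ‖(w.1 : ℂ) + w.2 * Complex.I - μ₁‖ ^ 2 =
        (w.1 - μ₁.re) ^ 2 + (w.2 - μ₁.im) ^ 2 := by
      rw [Complex.sq_norm, Complex.normSq_apply]
      simp
      ring
    rw [h1, h2]
    congr 1
    rw [hb]
    ring
  -- key algebraic identity
  have hKey : (1 + t) * (1 + ‖ξ₁‖ ^ 2) = K + D := by
    rw [ht, hK, hD]
    simp only [Complex.sq_norm]
    simp only [Complex.normSq_apply, Complex.add_re, Complex.add_im, Complex.sub_re,
      Complex.sub_im, Complex.mul_re, Complex.mul_im, Complex.one_re, Complex.one_im,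
      Complex.conj_re, Complex.conj_im]
    ring
  -- |μ₁|²
  have hμval : μ₁.re ^ 2 + μ₁.im ^ 2 = A * K / (1 + t) ^ 2 := by
    have : μ₁.re ^ 2 + μ₁.im ^ 2 = Complex.normSq μ₁ := by
      rw [Complex.normSq_apply]; ring
    rw [this, hμ₁, hw, Complex.normSq_div, Complex.normSq_mul, Complex.normSq_ofReal,
      hA, hK, Complex.sq_norm, Complex.sq_norm]
    ring
  -- ν₁
  have hνval : ν₁ = A * D / (1 + t) := by
    rw [hν₁, hw, hs₀, hs₁, norm_mul, norm_mul]
    have h1t : (1 + t) ≠ 0 := ne_of_gt ht1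
    field_simp
    linear_combination ‖c₁‖ ^ 2 * hKey
  have hexp : -ν₁ / σ ^ 2 = -(ρ * D / (1 + t)) := by
    rw [hνval, hρ]
    field_simp
  have hcoef : 1 / (π * σ ^ 2) ^ 2 * (π / b * (A * K / (1 + t) ^ 2 + 1 / b)) =
      ρ * K / (π * (1 + t) ^ 3) + 1 / (π * (1 + t) ^ 2) := by
    rw [hρ, hb, hA]
    have hπ : (π : ℝ) ≠ 0 := Real.pi_ne_zero
    field_simp
  rw [hint, hμval, hexp, ← hcoef]
  ring
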